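/- Let (p,p') be a pair of coprime positive integers with p ≥ 2, set a = p'/p and λ_{r,s} = (r−1)/2 − sp/(2p'), let ε,ε' ∈ {0,1}, and let r,s,θ,m be integers with 1 ≤ r ≤ p−1, 0 ≤ s ≤ p'−1, θ ∈ ℤ and 0 ≤ m ≤ 2p'−1. Then for all u ∈ ℂ and τ ∈ ℍ, h( (u−θ−(1−ε)/2)/p − (−rp'+sp−pm+pp')/(2pp') − (ε'p'−1/2)·τ/(2pp'); τ/(2pp') ) = 2p' e^{2πi(θ+(1−ε)/2)(ε'a−1/(2p))} e^{−πiε'(ar−s+m)} e^{−πi(−rp'+sp−pm)/(2pp')} e^{2πiτ(2ε'p'−1)²/(16pp')} e^{2πiu(−ε'a+1/(2p))} · ∫_{ℝ−i(ε'/2−1/(4p'))} [ e^{2π( p'−m−2a(λ_{r,s}−θ+ε/2) )y} / sinh(2p'πy) ] e^{2πiaτy²} e^{−4πauy} dy, where the contour integral means ∫_ℝ f( x − i(ε'/2 − 1/(4p')) ) dx and converges absolutely (the integrand has no poles on this contour). -/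

import Mathlib

open Complex MeasureTheory
open scoped Real

noncomputable section

/-- λ_{r,s} = (r−1)/2 − sp/(2p'). -/
def lam (p p' r s : ℤ) : ℝ := ((r : ℝ) - 1) / 2 - (s : ℝ) * p / (2 * p')

/-- The Mordell integral h(u;τ). -/
def mordellH (u τ : ℂ) : ℂ :=
  ∫ x : ℝ, Complex.exp ((π : ℂ) * Complex.I * τ * (x : ℂ) ^ 2 - 2 * (π : ℂ) * u * (x : ℂ)) /
    (Real.cosh (π * x) : ℂ)

/-- The integrand of the contour integral in the Mordell part of the continuous
contribution. -/
def mordellIntegrand (p p' : ℤ) (ε : ℕ) (r s θ m : ℤ) (u τ : ℂ) (y : ℂ) : ℂ :=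
  Complex.exp (2 * (π : ℂ) * ((p' : ℂ) - m -
      2 * ((p' : ℂ) / p) * ((lam p p' r s : ℂ) - θ + ε / 2)) * y) /
    Complex.sinh (2 * (p' : ℂ) * π * y) *
    Complex.exp (2 * (π : ℂ) * Complex.I * ((p' : ℂ) / p) * τ * y ^ 2) *
    Complex.exp (-4 * (π : ℂ) * ((p' : ℂ) / p) * u * y)

lemma sinh_shift (x d : ℂ) (hd : Complex.exp d ^ 2 = -1) :
    Complex.sinh (x + d) = Complex.exp d * Complex.cosh x := by
  have he : Complex.exp d ≠ 0 := Complex.exp_ne_zero d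
  have hinv : Complex.exp (-d) = -Complex.exp d := by
    rw [Complex.exp_neg]
    field_simp
    linear_combination hd
  rw [Complex.sinh, Complex.cosh, Complex.exp_add, neg_add, Complex.exp_add, hinv]
  ring

set_option maxHeartbeats 3200000 in
lemma key_pointwise (p p' : ℤ) (hP : (p : ℂ) ≠ 0) (hQ : (p' : ℂ) ≠ 0)
    (ε ε' : ℕ) (r s θ m : ℤ) (u τ : ℂ) (x : ℝ) :
    Complex.exp ((π : ℂ) * Complex.I * (τ / (2 * (p : ℂ) * (p' : ℂ))) *
          (((2 * (p' : ℝ) * x : ℝ)) : ℂ) ^ 2 -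
        2 * (π : ℂ) * ((u - θ - (1 - (ε : ℂ)) / 2) / p -
          ((-r * p' + s * p - p * m + p * p' : ℤ) : ℂ) / (2 * p * p') -
          ((ε' : ℂ) * p' - 1 / 2) * τ / (2 * p * p')) * (((2 * (p' : ℝ) * x : ℝ)) : ℂ)) /
      (Real.cosh (π * (2 * (p' : ℝ) * x)) : ℂ) =
    Complex.exp (2 * (π : ℂ) * Complex.I * ((θ : ℂ) + (1 - (ε : ℂ)) / 2) *
          ((ε' : ℂ) * ((p' : ℂ) / p) - 1 / (2 * p))) *
      Complex.exp (-(π : ℂ) * Complex.I * (ε' : ℂ) * (((p' : ℂ) / p) * r - s + m)) *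
      Complex.exp (-(π : ℂ) * Complex.I * ((-r * p' + s * p - p * m : ℤ) : ℂ) / (2 * p * p')) *
      Complex.exp (2 * (π : ℂ) * Complex.I * τ * (2 * (ε' : ℂ) * p' - 1) ^ 2 / (16 * p * p')) *
      Complex.exp (2 * (π : ℂ) * Complex.I * u * (-(ε' : ℂ) * ((p' : ℂ) / p) + 1 / (2 * p))) *
      mordellIntegrand p p' ε r s θ m u τ
        ((x : ℂ) - Complex.I * ((ε' : ℂ) / 2 - 1 / (4 * (p' : ℂ)))) := by
  have hI2 : Complex.I ^ 2 = -1 := Complex.I_sq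
  have hiP : (p : ℂ) * (p : ℂ)⁻¹ = 1 := mul_inv_cancel₀ hP
  have hiQ : (p' : ℂ) * (p' : ℂ)⁻¹ = 1 := mul_inv_cancel₀ hQ
  set d : ℂ := (π : ℂ) * Complex.I / 2 - (π : ℂ) * Complex.I * (p' : ℂ) * (ε' : ℂ) with hd
  have hd2 : Complex.exp d ^ 2 = -1 := by
    rw [sq, ← Complex.exp_add]
    rw [show d + d = (π : ℂ) * Complex.I + ((-(p' * (ε' : ℤ)) : ℤ) : ℂ) * (2 * (π : ℂ) * Complex.I) by
      rw [hd]; push_cast; ring]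
    rw [Complex.exp_add, Complex.exp_int_mul_two_pi_mul_I, Complex.exp_pi_mul_I]
    ring
  have hED : Complex.exp d ≠ 0 := Complex.exp_ne_zero d
  have hsinh : Complex.sinh (2 * (p' : ℂ) * (π : ℂ) *
        ((x : ℂ) - Complex.I * ((ε' : ℂ) / 2 - 1 / (4 * (p' : ℂ))))) =
      Complex.exp d * Complex.cosh (2 * (p' : ℂ) * (π : ℂ) * (x : ℂ)) := by
    rw [show 2 * (p' : ℂ) * (π : ℂ) * ((x : ℂ) - Complex.I * ((ε' : ℂ) / 2 - 1 / (4 * (p' : ℂ)))) =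
        2 * (p' : ℂ) * (π : ℂ) * (x : ℂ) + d by rw [hd]; field_simp; ring]
    exact sinh_shift _ _ hd2
  have hcosh : ((Real.cosh (π * (2 * (p' : ℝ) * x)) : ℝ) : ℂ) =
      Complex.cosh (2 * (p' : ℂ) * (π : ℂ) * (x : ℂ)) := by
    rw [Complex.ofReal_cosh]
    congr 1
    push_cast
    ring
  have hch : Complex.cosh (2 * (p' : ℂ) * (π : ℂ) * (x : ℂ)) ≠ 0 := by
    rw [← hcosh]
    exact_mod_cast (Real.cosh_pos (x := π * (2 * (p' : ℝ) * x))).ne'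
  have hexp : Complex.exp ((π : ℂ) * Complex.I * (τ / (2 * (p : ℂ) * (p' : ℂ))) *
          (((2 * (p' : ℝ) * x : ℝ)) : ℂ) ^ 2 -
        2 * (π : ℂ) * ((u - θ - (1 - (ε : ℂ)) / 2) / p -
          ((-r * p' + s * p - p * m + p * p' : ℤ) : ℂ) / (2 * p * p') -
          ((ε' : ℂ) * p' - 1 / 2) * τ / (2 * p * p')) * (((2 * (p' : ℝ) * x : ℝ)) : ℂ)) *
        Complex.exp d =
      Complex.exp (2 * (π : ℂ) * Complex.I * ((θ : ℂ) + (1 - (ε : ℂ)) / 2) *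
          ((ε' : ℂ) * ((p' : ℂ) / p) - 1 / (2 * p))) *
      Complex.exp (-(π : ℂ) * Complex.I * (ε' : ℂ) * (((p' : ℂ) / p) * r - s + m)) *
      Complex.exp (-(π : ℂ) * Complex.I * ((-r * p' + s * p - p * m : ℤ) : ℂ) / (2 * p * p')) *
      Complex.exp (2 * (π : ℂ) * Complex.I * τ * (2 * (ε' : ℂ) * p' - 1) ^ 2 / (16 * p * p')) *
      Complex.exp (2 * (π : ℂ) * Complex.I * u * (-(ε' : ℂ) * ((p' : ℂ) / p) + 1 / (2 * p))) *
      (Complex.exp (2 * (π : ℂ) * ((p' : ℂ) - m -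
          2 * ((p' : ℂ) / p) * ((lam p p' r s : ℂ) - θ + ε / 2)) *
          ((x : ℂ) - Complex.I * ((ε' : ℂ) / 2 - 1 / (4 * (p' : ℂ))))) *
        Complex.exp (2 * (π : ℂ) * Complex.I * ((p' : ℂ) / p) * τ *
          ((x : ℂ) - Complex.I * ((ε' : ℂ) / 2 - 1 / (4 * (p' : ℂ)))) ^ 2) *
        Complex.exp (-4 * (π : ℂ) * ((p' : ℂ) / p) * u *
          ((x : ℂ) - Complex.I * ((ε' : ℂ) / 2 - 1 / (4 * (p' : ℂ)))))) := by
    rw [hd]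
    simp only [← Complex.exp_add]
    congr 1
    simp only [lam]
    push_cast
    linear_combination (((-1/2 : ℂ) * (p':ℂ)⁻¹ * Complex.I * (π:ℂ) * (m:ℂ) + (1/2 : ℂ) * (p':ℂ)⁻¹ * Complex.I * (π:ℂ) * (s:ℂ) + (p':ℂ) * (p':ℂ)⁻¹ * Complex.I * (π:ℂ) * (ε':ℂ) * (s:ℂ) - 2 * (p':ℂ) * (p':ℂ)⁻¹ * (x:ℂ) * (π:ℂ) * (m:ℂ) + (-1/2 : ℂ) * (p':ℂ) * (p':ℂ)⁻¹ ^ 2 * Complex.I * (π:ℂ) * (s:ℂ) + 2 * (p':ℂ) ^ 2 * (p':ℂ)⁻¹ * (x:ℂ) * (π:ℂ))) * hiP + (((-1/2 : ℂ) * Complex.I * (π:ℂ) + Complex.I * (π:ℂ) * (ε':ℂ) * (s:ℂ) - 2 * (x:ℂ) * (π:ℂ) * (m:ℂ) + (-1/2 : ℂ) * (p':ℂ)⁻¹ * Complex.I * (π:ℂ) * (s:ℂ) + (-1/2 : ℂ) * (p:ℂ)⁻¹ * Complex.I * (π:ℂ) - (p:ℂ)⁻¹ * Complex.I * (π:ℂ)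 * (θ:ℂ) + (1/2 : ℂ) * (p:ℂ)⁻¹ * Complex.I * (π:ℂ) * (ε:ℂ) + (p:ℂ)⁻¹ * u * Complex.I * (π:ℂ) + (1/8 : ℂ) * (p:ℂ)⁻¹ * (p':ℂ)⁻¹ * τ * Complex.I * (π:ℂ) + 2 * (p':ℂ) * (x:ℂ) * (π:ℂ) + (-1/2 : ℂ) * (p':ℂ) * (p:ℂ)⁻¹ * τ * Complex.I * (π:ℂ) * (ε':ℂ) ^ 2 - 2 * (p':ℂ) * (p:ℂ)⁻¹ * (x:ℂ) * (π:ℂ) * (r:ℂ) + 2 * (p':ℂ) * (p:ℂ)⁻¹ * (x:ℂ) * τ * (π:ℂ) * (ε':ℂ) + 2 * (p':ℂ) * (p:ℂ)⁻¹ * (x:ℂ) ^ 2 * τ * Complex.I * (π:ℂ))) * hiQ +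
      (((-1/2 : ℂ) * (p':ℂ) * (p:ℂ)⁻¹ * τ * Complex.I * (π:ℂ) * (ε':ℂ) ^ 2 + 2 * (p':ℂ) * (p:ℂ)⁻¹ * (x:ℂ) * τ * (π:ℂ) * (ε':ℂ) + (1/2 : ℂ) * (p':ℂ) * (p:ℂ)⁻¹ * (p':ℂ)⁻¹ * τ * Complex.I * (π:ℂ) * (ε':ℂ) - (p':ℂ) * (p:ℂ)⁻¹ * (p':ℂ)⁻¹ * (x:ℂ) * τ * (π:ℂ) + (-1/8 : ℂ) * (p':ℂ) * (p:ℂ)⁻¹ * (p':ℂ)⁻¹ ^ 2 * τ * Complex.I * (π:ℂ))) * hI2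
  have hexpand : Complex.exp (2 * (π : ℂ) * Complex.I * ((θ : ℂ) + (1 - (ε : ℂ)) / 2) *
          ((ε' : ℂ) * ((p' : ℂ) / p) - 1 / (2 * p))) *
        Complex.exp (-(π : ℂ) * Complex.I * (ε' : ℂ) * (((p' : ℂ) / p) * r - s + m)) *
        Complex.exp (-(π : ℂ) * Complex.I * ((-r * p' + s * p - p * m : ℤ) : ℂ) / (2 * p * p')) *
        Complex.exp (2 * (π : ℂ) * Complex.I * τ * (2 * (ε' : ℂ) * p' - 1) ^ 2 / (16 * p * p')) *
        Complex.exp (2 * (π : ℂ) * Complex.I * u * (-(ε' : ℂ) * ((p' : ℂ) / p) + 1 / (2 * p))) *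
        (Complex.exp (2 * (π : ℂ) * ((p' : ℂ) - m -
            2 * ((p' : ℂ) / p) * ((lam p p' r s : ℂ) - θ + ε / 2)) *
            ((x : ℂ) - Complex.I * ((ε' : ℂ) / 2 - 1 / (4 * (p' : ℂ))))) /
            (Complex.exp d * Complex.cosh (2 * (p' : ℂ) * (π : ℂ) * (x : ℂ))) *
          Complex.exp (2 * (π : ℂ) * Complex.I * ((p' : ℂ) / p) * τ *
            ((x : ℂ) - Complex.I * ((ε' : ℂ) / 2 - 1 / (4 * (p' : ℂ)))) ^ 2) *
          Complex.exp (-4 * (π : ℂ) * ((p' : ℂ) / p) * u *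
            ((x : ℂ) - Complex.I * ((ε' : ℂ) / 2 - 1 / (4 * (p' : ℂ)))))) =
      (Complex.exp (2 * (π : ℂ) * Complex.I * ((θ : ℂ) + (1 - (ε : ℂ)) / 2) *
          ((ε' : ℂ) * ((p' : ℂ) / p) - 1 / (2 * p))) *
        Complex.exp (-(π : ℂ) * Complex.I * (ε' : ℂ) * (((p' : ℂ) / p) * r - s + m)) *
        Complex.exp (-(π : ℂ) * Complex.I * ((-r * p' + s * p - p * m : ℤ) : ℂ) / (2 * p * p')) *
        Complex.exp (2 * (π : ℂ) * Complex.I * τ * (2 * (ε' : ℂ) * p' - 1) ^ 2 / (16 * p * p')) *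
        Complex.exp (2 * (π : ℂ) * Complex.I * u * (-(ε' : ℂ) * ((p' : ℂ) / p) + 1 / (2 * p))) *
        (Complex.exp (2 * (π : ℂ) * ((p' : ℂ) - m -
            2 * ((p' : ℂ) / p) * ((lam p p' r s : ℂ) - θ + ε / 2)) *
            ((x : ℂ) - Complex.I * ((ε' : ℂ) / 2 - 1 / (4 * (p' : ℂ))))) *
          Complex.exp (2 * (π : ℂ) * Complex.I * ((p' : ℂ) / p) * τ *
            ((x : ℂ) - Complex.I * ((ε' : ℂ) / 2 - 1 / (4 * (p' : ℂ)))) ^ 2) *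
          Complex.exp (-4 * (π : ℂ) * ((p' : ℂ) / p) * u *
            ((x : ℂ) - Complex.I * ((ε' : ℂ) / 2 - 1 / (4 * (p' : ℂ))))))) /
        (Complex.exp d * Complex.cosh (2 * (p' : ℂ) * (π : ℂ) * (x : ℂ))) := by ring
  rw [mordellIntegrand, hsinh, hcosh, hexpand, div_eq_div_iff hch (mul_ne_zero hED hch)]
  linear_combination Complex.cosh (2 * (p' : ℂ) * (π : ℂ) * (x : ℂ)) * hexp


set_option maxHeartbeats 1600000 in
/-- The Mordell part of the continuous contribution of the atypical S-transformation. -/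
theorem mordell_part_identity (p p' : ℤ) (hp : 2 ≤ p) (hp' : 1 ≤ p')
    (hco : IsCoprime p p') (ε ε' : ℕ) (hε : ε ≤ 1) (hε' : ε' ≤ 1)
    (r s θ m : ℤ) (hr1 : 1 ≤ r) (hr2 : r ≤ p - 1) (hs1 : 0 ≤ s) (hs2 : s ≤ p' - 1)
    (hm0 : 0 ≤ m) (hm1 : m ≤ 2 * p' - 1) (u τ : ℂ) (hτ : 0 < τ.im) :
    Integrable (fun x : ℝ =>
      mordellIntegrand p p' ε r s θ m u τ
        ((x : ℂ) - Complex.I * ((ε' : ℂ) / 2 - 1 / (4 * (p' : ℂ))))) ∧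
    mordellH ((u - θ - (1 - (ε : ℂ)) / 2) / p -
        ((-r * p' + s * p - p * m + p * p' : ℤ) : ℂ) / (2 * p * p') -
        ((ε' : ℂ) * p' - 1 / 2) * τ / (2 * p * p'))
      (τ / (2 * p * p')) =
      2 * (p' : ℂ) *
        Complex.exp (2 * (π : ℂ) * Complex.I * ((θ : ℂ) + (1 - (ε : ℂ)) / 2) *
          ((ε' : ℂ) * ((p' : ℂ) / p) - 1 / (2 * p))) *
        Complex.exp (-(π : ℂ) * Complex.I * (ε' : ℂ) * (((p' : ℂ) / p) * r - s + m)) *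
        Complex.exp (-(π : ℂ) * Complex.I * ((-r * p' + s * p - p * m : ℤ) : ℂ) / (2 * p * p')) *
        Complex.exp (2 * (π : ℂ) * Complex.I * τ * (2 * (ε' : ℂ) * p' - 1) ^ 2 / (16 * p * p')) *
        Complex.exp (2 * (π : ℂ) * Complex.I * u * (-(ε' : ℂ) * ((p' : ℂ) / p) + 1 / (2 * p))) *
        ∫ x : ℝ, mordellIntegrand p p' ε r s θ m u τ
          ((x : ℂ) - Complex.I * ((ε' : ℂ) / 2 - 1 / (4 * (p' : ℂ)))) := by
  have hp0 : (0:ℝ) < (p:ℝ) := by exact_mod_cast (by omega : (0:ℤ) < p)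
  have hq0 : (0:ℝ) < (p':ℝ) := by exact_mod_cast (by omega : (0:ℤ) < p')
  have hP : (p:ℂ) ≠ 0 := by
    simpa using (Int.cast_ne_zero (α := ℂ)).mpr (by omega : p ≠ 0)
  have hQ : (p':ℂ) ≠ 0 := by
    simpa using (Int.cast_ne_zero (α := ℂ)).mpr (by omega : p' ≠ 0)
  set U : ℂ := (u - θ - (1 - (ε : ℂ)) / 2) / p -
      ((-r * p' + s * p - p * m + p * p' : ℤ) : ℂ) / (2 * p * p') -
      ((ε' : ℂ) * p' - 1 / 2) * τ / (2 * p * p') with hU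
  set K : ℂ := Complex.exp (2 * (π : ℂ) * Complex.I * ((θ : ℂ) + (1 - (ε : ℂ)) / 2) *
        ((ε' : ℂ) * ((p' : ℂ) / p) - 1 / (2 * p))) *
      Complex.exp (-(π : ℂ) * Complex.I * (ε' : ℂ) * (((p' : ℂ) / p) * r - s + m)) *
      Complex.exp (-(π : ℂ) * Complex.I * ((-r * p' + s * p - p * m : ℤ) : ℂ) / (2 * p * p')) *
      Complex.exp (2 * (π : ℂ) * Complex.I * τ * (2 * (ε' : ℂ) * p' - 1) ^ 2 / (16 * p * p')) *
      Complex.exp (2 * (π : ℂ) * Complex.I * u * (-(ε' : ℂ) * ((p' : ℂ) / p) + 1 / (2 * p)))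
    with hK
  have hK0 : K ≠ 0 := by
    rw [hK]
    apply_rules [mul_ne_zero, Complex.exp_ne_zero]
  set F : ℝ → ℂ := fun x : ℝ =>
      Complex.exp ((π : ℂ) * Complex.I * (τ / (2 * (p:ℂ) * (p':ℂ))) * (x : ℂ) ^ 2 -
        2 * (π : ℂ) * U * (x : ℂ)) / (Real.cosh (π * x) : ℂ) with hF
  have key : ∀ x : ℝ, F (2 * (p':ℝ) * x) =
      K * mordellIntegrand p p' ε r s θ m u τ
        ((x : ℂ) - Complex.I * ((ε' : ℂ) / 2 - 1 / (4 * (p' : ℂ)))) := by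
    intro x
    rw [hF, hU, hK]
    exact key_pointwise p p' hP hQ ε ε' r s θ m u τ x
  have hGeq : (fun x : ℝ => mordellIntegrand p p' ε r s θ m u τ
        ((x : ℂ) - Complex.I * ((ε' : ℂ) / 2 - 1 / (4 * (p' : ℂ))))) =
      fun x : ℝ => K⁻¹ * F (2 * (p':ℝ) * x) := by
    funext x
    rw [key x, inv_mul_cancel_left₀ hK0]
  have hb : (0:ℝ) < (-((π : ℂ) * Complex.I * (τ / (2 * (p:ℂ) * (p':ℂ))))).re := by
    have h1 : τ / (2 * (p:ℂ) * (p':ℂ)) = ((((2*(p:ℝ)*(p':ℝ))⁻¹ : ℝ)) : ℂ) * τ := by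
      push_cast
      rw [div_eq_mul_inv, mul_comm]
    rw [h1]
    have h2 : (-((π : ℂ) * Complex.I * (((((2*(p:ℝ)*(p':ℝ))⁻¹ : ℝ)) : ℂ) * τ))).re =
        π * ((2*(p:ℝ)*(p':ℝ))⁻¹ * τ.im) := by
      simp [Complex.mul_re, Complex.mul_im]
      try ring
    rw [h2]
    positivity
  have hquad : Integrable (fun x : ℝ =>
      Complex.exp (-(-((π : ℂ) * Complex.I * (τ / (2 * (p:ℂ) * (p':ℂ))))) * (x:ℂ)^2 +
        (-2*(π:ℂ)*U) * (x:ℂ) + 0)) := integrable_cexp_quadratic hb _ _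
  have hFint : Integrable F := by
    have heq : F = fun x : ℝ => ((Real.cosh (π*x) : ℝ) : ℂ)⁻¹ *
        Complex.exp (-(-((π : ℂ) * Complex.I * (τ / (2 * (p:ℂ) * (p':ℂ))))) * (x:ℂ)^2 +
          (-2*(π:ℂ)*U) * (x:ℂ) + 0) := by
      funext x
      rw [hF, div_eq_mul_inv, mul_comm]
      congr 1
      ring
    rw [heq]
    apply hquad.bdd_mul (c := 1)
    · apply Continuous.aestronglyMeasurable
      apply Continuous.inv₀
      · exact Complex.continuous_ofReal.comp (Real.continuous_cosh.comp
          (continuous_const.mul continuous_id))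
      · intro x
        exact_mod_cast (Real.cosh_pos (x := π * x)).ne'
    · refine Filter.Eventually.of_forall (fun x => ?_)
      rw [norm_inv, Complex.norm_real, Real.norm_eq_abs,
        abs_of_pos (Real.cosh_pos (x := π * x))]
      exact inv_le_one_of_one_le₀ (Real.one_le_cosh _)
  constructor
  · rw [hGeq]
    exact (hFint.comp_mul_left' (by positivity : (2*(p':ℝ)) ≠ 0)).const_mul _
  · have h0 : mordellH U (τ / (2 * (p:ℂ) * (p':ℂ))) = ∫ x : ℝ, F x := rfl
    rw [h0]
    have h1 : (∫ x : ℝ, F x) = (2*(p':ℝ)) • ∫ x : ℝ, F (2*(p':ℝ) * x) := by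
      rw [MeasureTheory.Measure.integral_comp_mul_left F (2*(p':ℝ)), smul_smul,
        abs_of_pos (by positivity : (0:ℝ) < (2*(p':ℝ))⁻¹),
        mul_inv_cancel₀ (by positivity : (2*(p':ℝ)) ≠ 0), one_smul]
    rw [h1]
    have h2 : (∫ x : ℝ, F (2*(p':ℝ) * x)) = K * ∫ x : ℝ, mordellIntegrand p p' ε r s θ m u τ
        ((x : ℂ) - Complex.I * ((ε' : ℂ) / 2 - 1 / (4 * (p' : ℂ)))) := by
      rw [← MeasureTheory.integral_const_mul]
      congr 1
      funext x
      exact key x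
    rw [h2, hK, Complex.real_smul]
    push_cast
    ring

end
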